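/- Let f ∈ K[x,y] be a weakly tame polynomial. Then the K[x,y]-module V_f is freely generated by the Hamiltonian vector field X₀ = (−f_y, f_x) together with one additional element X_* ∈ V_f if and only if f belongs to the Jacobian ideal J(f) = ⟨f_x, f_y⟩ of K[x,y]. -/

import Mathlib

open MvPolynomial

/-- `X ∈ V_f`: the pair `X = (P, Q)` defines a polynomial vector field
`P ∂/∂x + Q ∂/∂y` admitting the curve `f = 0` as an invariant curve,
i.e. `P f_x + Q f_y = k f` for some cofactor `k`. -/
def VfMem {K : Type*} [Field K] (f : MvPolynomial (Fin 2) K)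
    (X : MvPolynomial (Fin 2) K × MvPolynomial (Fin 2) K) : Prop :=
  ∃ k : MvPolynomial (Fin 2) K,
    X.1 * pderiv (0 : Fin 2) f + X.2 * pderiv (1 : Fin 2) f = k * f

/-- The `K[x,y]`-module `V_f` is freely generated by `v₀` and `v₁`:
both belong to `V_f`, and every element of `V_f` is a unique
`K[x,y]`-linear combination of `v₀` and `v₁`. -/
def FreelyGen {K : Type*} [Field K] (f : MvPolynomial (Fin 2) K)
    (v₀ v₁ : MvPolynomial (Fin 2) K × MvPolynomial (Fin 2) K) : Prop :=
  VfMem f v₀ ∧ VfMem f v₁ ∧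
    ∀ w, VfMem f w →
      ∃! c : MvPolynomial (Fin 2) K × MvPolynomial (Fin 2) K,
        w = c.1 • v₀ + c.2 • v₁

section Aux

variable {K : Type*} [Field K]

/-- `Polynomial.aeval (X i)` is injective. -/
lemma aux_aeval_X_eq_zero {i : Fin 2} {p : Polynomial K}
    (h : Polynomial.aeval (X i : MvPolynomial (Fin 2) K) p = 0) : p = 0 := by
  have h2 : (MvPolynomial.aeval fun _ : Fin 2 => (Polynomial.X : Polynomial K))
      (Polynomial.aeval (X i : MvPolynomial (Fin 2) K) p) = 0 := by rw [h, map_zero]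
  rwa [← Polynomial.aeval_algHom_apply, MvPolynomial.aeval_X,
    Polynomial.aeval_X_left_apply] at h2

set_option synthInstance.maxHeartbeats 1000000 in
/-- If the quotient is finite dimensional, the ideal contains a nonzero
univariate polynomial in each variable. -/
lemma aux_exists_univ (J : Ideal (MvPolynomial (Fin 2) K))
    (h : FiniteDimensional K (MvPolynomial (Fin 2) K ⧸ J)) (i : Fin 2) :
    ∃ p : Polynomial K, p ≠ 0 ∧
      Polynomial.aeval (X i : MvPolynomial (Fin 2) K) p ∈ J := by
  have : Algebra.IsIntegral K (MvPolynomial (Fin 2) K ⧸ J) :=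
    Algebra.IsIntegral.of_finite K _
  obtain ⟨P, hP, hPz⟩ := this.isIntegral ((Ideal.Quotient.mkₐ K J) (X i))
  refine ⟨P, hP.ne_zero, ?_⟩
  rw [← Ideal.Quotient.eq_zero_iff_mem (I := J)]
  have : (Ideal.Quotient.mkₐ K J) (Polynomial.aeval (X i : MvPolynomial (Fin 2) K) P) = 0 := by
    rw [← Polynomial.aeval_algHom_apply]
    rw [← Polynomial.aeval_def] at hPz
    exact hPz
  simpa using this

lemma aux_deg0_mul {a b : MvPolynomial (Fin 2) K} (ha : a ≠ 0) (hb : b ≠ 0) :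
    degreeOf (0 : Fin 2) (a * b) = degreeOf 0 a + degreeOf 0 b := by
  have ha' : finSuccEquiv K 1 a ≠ 0 := fun h =>
    ha (by simpa using congrArg (finSuccEquiv K 1).symm h)
  have hb' : finSuccEquiv K 1 b ≠ 0 := fun h =>
    hb (by simpa using congrArg (finSuccEquiv K 1).symm h)
  rw [← natDegree_finSuccEquiv, ← natDegree_finSuccEquiv a, ← natDegree_finSuccEquiv b,
    map_mul, Polynomial.natDegree_mul ha' hb']

lemma aux_deg1_eq (q : MvPolynomial (Fin 2) K) :
    degreeOf (1 : Fin 2) q = degreeOf 0 (rename (Equiv.swap (0 : Fin 2) 1) q) := by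
  have h := degreeOf_rename_of_injective
    (p := rename (Equiv.swap (0 : Fin 2) 1) q)
    (f := (Equiv.swap (0 : Fin 2) 1)) (Equiv.swap (0 : Fin 2) 1).injective 0
  rw [Equiv.swap_apply_left] at h
  have hcomp : (⇑(Equiv.swap (0 : Fin 2) 1) ∘ ⇑(Equiv.swap (0 : Fin 2) 1)) = id :=
    funext fun x => Equiv.swap_apply_self _ _ x
  rw [← h, rename_rename, hcomp, rename_id, AlgHom.id_apply]

lemma aux_deg1_mul {a b : MvPolynomial (Fin 2) K} (ha : a ≠ 0) (hb : b ≠ 0) :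
    degreeOf (1 : Fin 2) (a * b) = degreeOf 1 a + degreeOf 1 b := by
  have ha' : rename (Equiv.swap (0 : Fin 2) 1) a ≠ 0 := fun h =>
    ha ((rename_injective _ (Equiv.swap (0 : Fin 2) 1).injective) (by simpa using h))
  have hb' : rename (Equiv.swap (0 : Fin 2) 1) b ≠ 0 := fun h =>
    hb ((rename_injective _ (Equiv.swap (0 : Fin 2) 1).injective) (by simpa using h))
  rw [aux_deg1_eq, aux_deg1_eq a, aux_deg1_eq b, map_mul, aux_deg0_mul ha' hb']

lemma aux_degreeOf_aeval_X {i j : Fin 2} (hij : j ≠ i) (p : Polynomial K) :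
    degreeOf j (Polynomial.aeval (X i : MvPolynomial (Fin 2) K) p) = 0 := by
  induction p using Polynomial.induction_on' with
  | add f g hf hg =>
    refine Nat.le_zero.mp (le_trans ?_ (le_of_eq (by simp [hf, hg]) :
      max (degreeOf j (Polynomial.aeval (X i : MvPolynomial (Fin 2) K) f))
        (degreeOf j (Polynomial.aeval (X i : MvPolynomial (Fin 2) K) g)) ≤ 0))
    rw [map_add]
    exact degreeOf_add_le _ _ _
  | monomial n a =>
    rw [Polynomial.aeval_monomial]
    refine Nat.le_zero.mp (le_trans (degreeOf_mul_le _ _ _) ?_)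
    have h1 : degreeOf j (algebraMap K (MvPolynomial (Fin 2) K) a) = 0 := degreeOf_C a j
    have h2 : degreeOf j ((X i : MvPolynomial (Fin 2) K) ^ n) = 0 := by
      refine Nat.le_zero.mp (le_trans (degreeOf_pow_le _ _ _) ?_)
      rw [degreeOf_X]
      simp [hij]
    rw [h1, h2]

lemma aux_eq_C {d : MvPolynomial (Fin 2) K} (h0 : degreeOf (0 : Fin 2) d = 0)
    (h1 : degreeOf (1 : Fin 2) d = 0) : d = C (coeff 0 d) := by
  ext m
  rw [coeff_C]
  split_ifs with hm
  · rw [← hm]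
  · rcases eq_or_ne (coeff m d) 0 with h | h
    · exact h
    · exfalso
      apply hm
      have hmem : m ∈ d.support := mem_support_iff.mpr h
      have hm0 : m 0 = 0 := Nat.le_zero.mp (degreeOf_le_iff.mp (le_of_eq h0) m hmem)
      have hm1 : m 1 = 0 := Nat.le_zero.mp (degreeOf_le_iff.mp (le_of_eq h1) m hmem)
      ext i
      fin_cases i
      · exact hm0.symm
      · exact hm1.symm

lemma aux_isUnit {d : MvPolynomial (Fin 2) K} {p q : Polynomial K}
    (hp : p ≠ 0) (hq : q ≠ 0)
    (hdp : d ∣ Polynomial.aeval (X (0 : Fin 2) : MvPolynomial (Fin 2) K) p)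
    (hdq : d ∣ Polynomial.aeval (X (1 : Fin 2) : MvPolynomial (Fin 2) K) q) :
    IsUnit d := by
  obtain ⟨g, hg⟩ := hdp
  obtain ⟨h, hh⟩ := hdq
  have hP : Polynomial.aeval (X (0 : Fin 2) : MvPolynomial (Fin 2) K) p ≠ 0 :=
    fun h0 => hp (aux_aeval_X_eq_zero h0)
  have hQ : Polynomial.aeval (X (1 : Fin 2) : MvPolynomial (Fin 2) K) q ≠ 0 :=
    fun h0 => hq (aux_aeval_X_eq_zero h0)
  have hd : d ≠ 0 := by rintro rfl; rw [hg] at hP; simp at hP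
  have hgne : g ≠ 0 := by rintro rfl; rw [hg] at hP; simp at hP
  have hhne : h ≠ 0 := by rintro rfl; rw [hh] at hQ; simp at hQ
  have h1 : degreeOf (1 : Fin 2) d = 0 := by
    have := aux_deg1_mul hd hgne
    rw [← hg, aux_degreeOf_aeval_X (by decide) p] at this
    omega
  have h0 : degreeOf (0 : Fin 2) d = 0 := by
    have := aux_deg0_mul hd hhne
    rw [← hh, aux_degreeOf_aeval_X (by decide) q] at this
    omega
  rw [aux_eq_C h0 h1]
  exact (isUnit_iff_ne_zero.mpr (fun hc => hd (by rw [aux_eq_C h0 h1, hc, map_zero]))).map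
    (C : K →+* MvPolynomial (Fin 2) K)

end Aux

/-- For a weakly tame `f ∈ K[x,y]`, the module `V_f` is freely
generated by the Hamiltonian vector field `X₀ = (-f_y, f_x)` together with one
additional element `X_* ∈ V_f` iff `f ∈ J(f) = ⟨f_x, f_y⟩`. -/
theorem stmt0 (K : Type*) [Field K] [Algebra K ℂ]
    (f : MvPolynomial (Fin 2) K)
    (hwt : FiniteDimensional K
      (MvPolynomial (Fin 2) K ⧸
        Ideal.span {pderiv (0 : Fin 2) f, pderiv (1 : Fin 2) f})) :
    (∃ Xstar, FreelyGen f (-(pderiv (1 : Fin 2) f), pderiv (0 : Fin 2) f) Xstar) ↔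
      f ∈ Ideal.span {pderiv (0 : Fin 2) f, pderiv (1 : Fin 2) f} := by
  set fx := pderiv (0 : Fin 2) f with hfxdef
  set fy := pderiv (1 : Fin 2) f with hfydef
  set J := Ideal.span {fx, fy} with hJdef
  obtain ⟨p, hp, hpJ⟩ := aux_exists_univ J hwt 0
  obtain ⟨q, hq, hqJ⟩ := aux_exists_univ J hwt 1
  -- not both partials are zero
  have hne : ¬(fx = 0 ∧ fy = 0) := by
    rintro ⟨h0, h1⟩
    rw [hJdef, h0, h1] at hpJ
    have : ({(0 : MvPolynomial (Fin 2) K), 0} : Set (MvPolynomial (Fin 2) K)) = {0} := by simp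
    rw [this, Ideal.span_singleton_eq_bot.mpr rfl, Ideal.mem_bot] at hpJ
    exact hp (aux_aeval_X_eq_zero hpJ)
  have hf0 : f ≠ 0 := by
    rintro rfl
    exact hne ⟨by simp [hfxdef], by simp [hfydef]⟩
  -- coprimality of the partials
  have hcop : IsRelPrime fx fy := by
    intro d hdx hdy
    have hle : J ≤ Ideal.span {d} := by
      rw [hJdef, Ideal.span_le]
      rintro z (rfl | rfl)
      · exact Ideal.mem_span_singleton.mpr hdx
      · exact Ideal.mem_span_singleton.mpr hdy
    exact aux_isUnit hp hq (Ideal.mem_span_singleton.mp (hle hpJ))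
      (Ideal.mem_span_singleton.mp (hle hqJ))
  constructor
  · -- freely generated → f ∈ J
    rintro ⟨⟨A, B⟩, -, ⟨k, hk⟩, huniq⟩
    dsimp only at hk
    rw [← hfxdef, ← hfydef] at hk
    have hw1 : VfMem f (f, 0) := ⟨pderiv (0 : Fin 2) f, by ring⟩
    have hw2 : VfMem f (0, f) := ⟨pderiv (1 : Fin 2) f, by ring⟩
    obtain ⟨⟨c₁, c₂⟩, hc, -⟩ := huniq _ hw1
    obtain ⟨⟨d₁, d₂⟩, hd, -⟩ := huniq _ hw2
    have hc1 : f = c₁ * (-fy) + c₂ * A := by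
      have := congrArg Prod.fst hc; simpa [smul_eq_mul] using this
    have hc2 : (0 : MvPolynomial (Fin 2) K) = c₁ * fx + c₂ * B := by
      have := congrArg Prod.snd hc; simpa [smul_eq_mul] using this
    have hd1 : (0 : MvPolynomial (Fin 2) K) = d₁ * (-fy) + d₂ * A := by
      have := congrArg Prod.fst hd; simpa [smul_eq_mul] using this
    have hd2 : f = d₁ * fx + d₂ * B := by
      have := congrArg Prod.snd hd; simpa [smul_eq_mul] using this
    by_cases hk0 : k = 0
    · exfalso
      subst hk0
      rcases not_and_or.mp hne with hfx | hfy
      · have : f * fx = 0 := by linear_combination fx * hc1 + fy * hc2 + c₂ * hk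
        exact mul_ne_zero hf0 hfx this
      · have : f * fy = 0 := by linear_combination fx * hd1 + fy * hd2 + d₂ * hk
        exact mul_ne_zero hf0 hfy this
    · have hc₂k : c₂ * k = fx := by
        refine mul_right_cancel₀ hf0 ?_
        linear_combination (-c₂) * hk - fx * hc1 - fy * hc2
      have hd₂k : d₂ * k = fy := by
        refine mul_right_cancel₀ hf0 ?_
        linear_combination (-d₂) * hk - fx * hd1 - fy * hd2
      have hA : c₂ * A = f + c₁ * fy := by linear_combination -hc1
      have hB : d₂ * B = f - d₁ * fx := by linear_combination -hd2
      have e2 : k * f = k * (c₂ * A) + k * (d₂ * B) := by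
        linear_combination -hk - A * hc₂k - B * hd₂k
      rw [hA, hB] at e2
      have e3 : k * f = k * (d₁ * fx + (-c₁) * fy) := by linear_combination -e2
      have hfin : f = d₁ * fx + (-c₁) * fy := mul_left_cancel₀ hk0 e3
      exact Ideal.mem_span_pair.mpr ⟨d₁, -c₁, hfin.symm⟩
  · -- f ∈ J → freely generated
    intro hfJ
    obtain ⟨a, b, hab⟩ := Ideal.mem_span_pair.mp hfJ
    refine ⟨(a, b), ⟨0, by dsimp only; rw [hfxdef, hfydef]; ring⟩,
      ⟨1, by dsimp only; rw [← hfxdef, ← hfydef]; linear_combination hab⟩, ?_⟩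
    rintro ⟨P, Q⟩ ⟨k, hk⟩
    dsimp only at hk
    rw [← hfxdef, ← hfydef] at hk
    -- syzygy: (P - k*a, Q - k*b) is a multiple of (-fy, fx)
    have hsyz : (P - k * a) * fx + (Q - k * b) * fy = 0 := by
      linear_combination hk - k * hab
    obtain ⟨c₀, hs1, hs2⟩ :
        ∃ c₀, P - k * a = -(c₀ * fy) ∧ Q - k * b = c₀ * fx := by
      by_cases hfy : fy = 0
      · have hux : IsUnit fx := hcop dvd_rfl (hfy ▸ dvd_zero fx)
        obtain ⟨u, hu⟩ := hux
        have hfx0 : fx ≠ 0 := hu ▸ u.ne_zero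
        have hP0 : P - k * a = 0 := by
          have : (P - k * a) * fx = 0 := by rw [hfy] at hsyz; linear_combination hsyz
          exact (mul_eq_zero.mp this).resolve_right hfx0
        refine ⟨(Q - k * b) * ↑u⁻¹, by rw [hfy]; simpa using hP0, ?_⟩
        rw [mul_assoc, ← hu, Units.inv_mul, mul_one]
      · have hdvd : fy ∣ (P - k * a) * fx := ⟨-(Q - k * b), by linear_combination hsyz⟩
        have hdvd2 : fy ∣ P - k * a := hcop.symm.dvd_of_dvd_mul_right hdvd
        obtain ⟨e, he⟩ := hdvd2
        refine ⟨-e, by rw [he]; ring, ?_⟩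
        have : fy * ((Q - k * b) - (-e) * fx) = 0 := by
          linear_combination hsyz - fx * he
        have := (mul_eq_zero.mp this).resolve_left hfy
        linear_combination this
    refine ⟨(c₀, k), ?_, ?_⟩
    · simp only [Prod.smul_mk, Prod.mk_add_mk, Prod.mk.injEq, smul_eq_mul]
      exact ⟨by linear_combination hs1, by linear_combination hs2⟩
    · rintro ⟨c₁, c₂⟩ hcc
      have h1 : P = c₁ * (-fy) + c₂ * a := by
        have := congrArg Prod.fst hcc; simpa [smul_eq_mul] using this
      have h2 : Q = c₁ * fx + c₂ * b := by
        have := congrArg Prod.snd hcc; simpa [smul_eq_mul] using this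
      have hc₂ : c₂ = k := by
        refine mul_right_cancel₀ hf0 ?_
        linear_combination hk - c₂ * hab - fx * h1 - fy * h2
      subst hc₂
      have hc₁ : c₁ = c₀ := by
        rcases not_and_or.mp hne with hfx | hfy
        · refine mul_right_cancel₀ hfx ?_
          linear_combination hs2 - h2
        · refine mul_right_cancel₀ hfy ?_
          linear_combination h1 - hs1
      rw [hc₁]
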